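/- Let p ∈ ℤ and q ∈ ℕ* be relatively prime, γ = 2πp/q, ω ∈ ℝ, and P_K(θ₁,θ₂,ω,λ) the characteristic polynomial of the 3q×3q kagome matrix M_K(θ₁,θ₂,ω). Then the function (θ₁,θ₂) ↦ P_K(θ₁ + pπ, θ₂ + pπ, ω, λ) is invariant under the rotation r(θ₁,θ₂) = (-θ₁ + θ₂, -θ₁), i.e. P_K(-θ₁ + θ₂ + pπ, -θ₁ + pπ, ω, λ) = P_K(θ₁ + pπ, θ₂ + pπ, ω, λ) for all (θ₁,θ₂) ∈ ℝ² and λ ∈ ℂ. -/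

import Mathlib

noncomputable section

open Matrix Complex

/-- `J_{p,q}` : the `q × q` diagonal matrix with diagonal entries `e^{i(j-1)γ}`, `j = 1,…,q`,
where `γ = 2πp/q`. -/
def Jmat (p : ℤ) (q : ℕ) : Matrix (Fin q) (Fin q) ℂ :=
  Matrix.diagonal fun j => Complex.exp (Complex.I * ((j : ℕ) : ℂ) *
    ((2 * Real.pi * (p : ℝ) / (q : ℝ) : ℝ) : ℂ))

/-- `K_q` : the `q × q` cyclic shift matrix, `(K_q)_{jk} = 1` if `k ≡ j+1 [q]`, `0` otherwise. -/
def Kmat (q : ℕ) : Matrix (Fin q) (Fin q) ℂ :=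
  Matrix.of fun j k => if ((j : ℕ) + 1) % q = (k : ℕ) then 1 else 0

/-- Block `A(θ₁,θ₂,ω) = e^{i(ω+γ/8)}(e^{-iθ₁}J* + e^{-iγ/2}e^{-i(θ₁-θ₂)}J*K)`. -/
def AK (p : ℤ) (q : ℕ) (θ₁ θ₂ ω : ℝ) : Matrix (Fin q) (Fin q) ℂ :=
  Complex.exp (Complex.I * ((ω + 2 * Real.pi * (p : ℝ) / (q : ℝ) / 8 : ℝ) : ℂ)) •
    (Complex.exp (-(Complex.I) * (θ₁ : ℂ)) • (Jmat p q)ᴴ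
      + (Complex.exp (-(Complex.I) * ((2 * Real.pi * (p : ℝ) / (q : ℝ) / 2 : ℝ) : ℂ)) *
          Complex.exp (-(Complex.I) * ((θ₁ - θ₂ : ℝ) : ℂ))) • ((Jmat p q)ᴴ * Kmat q))

/-- Block `B(θ₁,θ₂,ω) = e^{-i(ω+γ/8)}(e^{-iθ₁}J* + e^{-iθ₂}K*)`. -/
def BK (p : ℤ) (q : ℕ) (θ₁ θ₂ ω : ℝ) : Matrix (Fin q) (Fin q) ℂ :=
  Complex.exp (-(Complex.I) * ((ω + 2 * Real.pi * (p : ℝ) / (q : ℝ) / 8 : ℝ) : ℂ)) •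
    (Complex.exp (-(Complex.I) * (θ₁ : ℂ)) • (Jmat p q)ᴴ
      + Complex.exp (-(Complex.I) * (θ₂ : ℂ)) • (Kmat q)ᴴ)

/-- Block `C(θ₁,θ₂,ω) = e^{i(ω+γ/8)}(e^{-iγ/2}e^{i(θ₁-θ₂)}JK* + e^{-iθ₂}K*)`. -/
def CK (p : ℤ) (q : ℕ) (θ₁ θ₂ ω : ℝ) : Matrix (Fin q) (Fin q) ℂ :=
  Complex.exp (Complex.I * ((ω + 2 * Real.pi * (p : ℝ) / (q : ℝ) / 8 : ℝ) : ℂ)) •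
    ((Complex.exp (-(Complex.I) * ((2 * Real.pi * (p : ℝ) / (q : ℝ) / 2 : ℝ) : ℂ)) *
        Complex.exp (Complex.I * ((θ₁ - θ₂ : ℝ) : ℂ))) • (Jmat p q * (Kmat q)ᴴ)
      + Complex.exp (-(Complex.I) * (θ₂ : ℂ)) • (Kmat q)ᴴ)

/-- The Hou (kagome) matrix : the `3q × 3q` block matrix `[[0,A,B],[A*,0,C],[B*,C*,0]]`,
indexed by `Fin 3 × Fin q` (first component = block index). -/
def MK (p : ℤ) (q : ℕ) (θ₁ θ₂ ω : ℝ) : Matrix (Fin 3 × Fin q) (Fin 3 × Fin q) ℂ :=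
  Matrix.of fun x y =>
    (![![0, AK p q θ₁ θ₂ ω, BK p q θ₁ θ₂ ω],
       ![(AK p q θ₁ θ₂ ω)ᴴ, 0, CK p q θ₁ θ₂ ω],
       ![(BK p q θ₁ θ₂ ω)ᴴ, (CK p q θ₁ θ₂ ω)ᴴ, 0]] x.1 y.1) x.2 y.2

/-- The characteristic polynomial `P_K(θ₁,θ₂,ω,λ) = det(M_K(θ₁,θ₂,ω) - λ I_{3q})`. -/
def PK (p : ℤ) (q : ℕ) (θ₁ θ₂ ω : ℝ) (l : ℂ) : ℂ :=
  Matrix.det (MK p q θ₁ θ₂ ω - l • (1 : Matrix (Fin 3 × Fin q) (Fin 3 × Fin q) ℂ))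


-- ===== auxiliary machinery =====

section Aux

lemma exp_shift (A B : ℂ) (n : ℤ) (h : A = B + n * (2 * (Real.pi:ℂ) * Complex.I)) :
    Complex.exp A = Complex.exp B := by
  rw [h, Complex.exp_add, Complex.exp_int_mul_two_pi_mul_I, mul_one]

def vf (p : ℤ) (q : ℕ) (j k : ℕ) : ℂ :=
  Complex.exp (Complex.I * (Real.pi:ℂ) * (p:ℂ) * ((j:ℂ) * q + j * j + 2 * j * k) / q)

def jf (p : ℤ) (q : ℕ) (n : ℕ) : ℂ :=
  Complex.exp (Complex.I * (n : ℂ) * ((2 * Real.pi * (p : ℝ) / (q : ℝ) : ℝ) : ℂ))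

/-- the conjugating matrix -/
def Vm (p : ℤ) (q : ℕ) : Matrix (Fin q) (Fin q) ℂ :=
  Matrix.of fun j k => vf p q (j : ℕ) (k : ℕ)

variable {p : ℤ} {q : ℕ}

lemma vf_right_q (hq : 0 < q) (j k : ℕ) : vf p q j (k + q) = vf p q j k := by
  have hq0 : (q:ℂ) ≠ 0 := Nat.cast_ne_zero.2 hq.ne'
  apply exp_shift _ _ (p * j)
  push_cast
  field_simp
  ring

lemma vf_right_add_mul (hq : 0 < q) (j k t : ℕ) : vf p q j (k + q * t) = vf p q j k := by
  induction t with
  | zero => simp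
  | succ t ih =>
      rw [show k + q * (t+1) = (k + q * t) + q by ring, vf_right_q hq, ih]

lemma vf_right_mod (hq : 0 < q) (j k : ℕ) : vf p q j (k % q) = vf p q j k := by
  conv_rhs => rw [← Nat.mod_add_div k q]
  rw [vf_right_add_mul hq]

lemma vf_left_q (hq : 0 < q) (j k : ℕ) : vf p q (j + q) k = vf p q j k := by
  have hq0 : (q:ℂ) ≠ 0 := Nat.cast_ne_zero.2 hq.ne'
  apply exp_shift _ _ (p * (q + j + k))
  push_cast
  field_simp
  ring

lemma vf_left_add_mul (hq : 0 < q) (j k t : ℕ) : vf p q (j + q * t) k = vf p q j k := by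
  induction t with
  | zero => simp
  | succ t ih =>
      rw [show j + q * (t+1) = (j + q * t) + q by ring, vf_left_q hq, ih]

lemma vf_left_mod (hq : 0 < q) (j k : ℕ) : vf p q (j % q) k = vf p q j k := by
  conv_rhs => rw [← Nat.mod_add_div j q]
  rw [vf_left_add_mul hq]

lemma jf_q (hq : 0 < q) (n : ℕ) : jf p q (n + q) = jf p q n := by
  have hq0 : (q:ℂ) ≠ 0 := Nat.cast_ne_zero.2 hq.ne'
  apply exp_shift _ _ p
  push_cast
  field_simp

lemma jf_add_mul (hq : 0 < q) (n t : ℕ) : jf p q (n + q * t) = jf p q n := by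
  induction t with
  | zero => simp
  | succ t ih =>
      rw [show n + q * (t+1) = (n + q * t) + q by ring, jf_q hq, ih]

lemma jf_mod (hq : 0 < q) (n : ℕ) : jf p q (n % q) = jf p q n := by
  conv_rhs => rw [← Nat.mod_add_div n q]
  rw [jf_add_mul hq]

lemma Jmat_eq : Jmat p q = Matrix.diagonal fun j : Fin q => jf p q (j : ℕ) := rfl

lemma fin_val_add_one [NeZero q] (j : Fin q) : ((j + 1 : Fin q) : ℕ) = ((j : ℕ) + 1) % q := by
  rw [Fin.add_def]
  simp only [Fin.val_one']
  conv_rhs => rw [Nat.add_mod]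
  rw [Nat.mod_eq_of_lt j.isLt]

lemma Kmat_apply [NeZero q] (j k : Fin q) :
    Kmat q j k = if j + 1 = k then 1 else 0 := by
  have : (((j : ℕ) + 1) % q = (k : ℕ)) ↔ (j + 1 = k) := by
    rw [Fin.ext_iff, fin_val_add_one]
  simp only [Kmat, Matrix.of_apply]
  exact if_congr this rfl rfl

lemma K_mul (X : Matrix (Fin q) (Fin q) ℂ) [NeZero q] (j k : Fin q) :
    (Kmat q * X) j k = X (j + 1) k := by
  rw [Matrix.mul_apply]
  rw [Finset.sum_eq_single (j + 1)]
  · rw [Kmat_apply]; simp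
  · intro b _ hb; rw [Kmat_apply]; simp [Ne.symm hb]
  · simp

lemma mul_KH (X : Matrix (Fin q) (Fin q) ℂ) [NeZero q] (j k : Fin q) :
    (X * (Kmat q)ᴴ) j k = X j (k + 1) := by
  rw [Matrix.mul_apply]
  rw [Finset.sum_eq_single (k + 1)]
  · rw [Matrix.conjTranspose_apply, Kmat_apply]; simp
  · intro b _ hb; rw [Matrix.conjTranspose_apply, Kmat_apply]; simp [Ne.symm hb]
  · simp

-- scalar constants
def cc (p : ℤ) (q : ℕ) : ℂ := Complex.exp (Complex.I * (Real.pi:ℂ) * p * ((q:ℂ) - 1) / q)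
def cc' (p : ℤ) (q : ℕ) : ℂ := Complex.exp (-(Complex.I * (Real.pi:ℂ) * p * ((q:ℂ) - 1) / q))
def c2 (p : ℤ) (q : ℕ) : ℂ := Complex.exp (-(Complex.I * (Real.pi:ℂ) * p * ((q:ℂ) + 1) / q))
def c3 (p : ℤ) (q : ℕ) : ℂ := Complex.exp (Complex.I * (Real.pi:ℂ) * p * ((q:ℂ) + 1) / q)
def zz (p : ℤ) (q : ℕ) : ℂ := Complex.exp (Complex.I * 2 * (Real.pi:ℂ) * p / q)
def zz' (p : ℤ) (q : ℕ) : ℂ := Complex.exp (-(Complex.I * 2 * (Real.pi:ℂ) * p / q))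

lemma cc_mul_cc' : cc p q * cc' p q = 1 := by
  rw [cc, cc', ← Complex.exp_add]
  simp

lemma star_jf (n : ℕ) : star (jf p q n) =
    Complex.exp (-(Complex.I * (n : ℂ) * ((2 * Real.pi * (p : ℝ) / (q : ℝ) : ℝ) : ℂ))) := by
  rw [jf]
  rw [show (star (Complex.exp (Complex.I * (n : ℂ) *
      ((2 * Real.pi * (p : ℝ) / (q : ℝ) : ℝ) : ℂ))) : ℂ) = (starRingEnd ℂ)
      (Complex.exp (Complex.I * (n : ℂ) * ((2 * Real.pi * (p : ℝ) / (q : ℝ) : ℝ) : ℂ))) from rfl]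
  rw [← Complex.exp_conj]
  congr 1
  simp only [_root_.map_mul, map_ofNat, Complex.conj_ofReal, Complex.conj_I, Complex.conj_natCast]
  ring

lemma JJH : Jmat p q * (Jmat p q)ᴴ = 1 := by
  ext n m
  rw [Jmat_eq, Matrix.diagonal_conjTranspose, Matrix.diagonal_mul_diagonal,
    Matrix.diagonal_apply, Matrix.one_apply]
  by_cases h : n = m
  · rw [if_pos h, if_pos h, Pi.star_apply, star_jf, jf, ← Complex.exp_add]
    simp
  · rw [if_neg h, if_neg h]

lemma JHJ : (Jmat p q)ᴴ * Jmat p q = 1 := mul_eq_one_comm.mp JJH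

lemma KKH (hq : 0 < q) : Kmat q * (Kmat q)ᴴ = 1 := by
  haveI : NeZero q := ⟨hq.ne'⟩
  ext j k
  rw [K_mul, Matrix.conjTranspose_apply, Kmat_apply, Matrix.one_apply]
  by_cases h : j = k
  · simp [h]
  · have h2 : ¬ (k + 1 = j + 1) := by
      simpa [add_left_inj] using (Ne.symm h)
    simp [h, h2]

lemma KHK (hq : 0 < q) : (Kmat q)ᴴ * Kmat q = 1 := mul_eq_one_comm.mp (KKH hq)

lemma jf_succ [NeZero q] (hq : 0 < q) (k : Fin q) :
    jf p q ((k + 1 : Fin q) : ℕ) = zz p q * jf p q (k : ℕ) := by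
  have hq0 : (q:ℂ) ≠ 0 := Nat.cast_ne_zero.2 hq.ne'
  rw [fin_val_add_one, jf_mod hq, zz, jf, jf, ← Complex.exp_add]
  apply exp_shift _ _ 0
  push_cast
  field_simp
  ring

lemma star_zz : star (zz p q) = zz' p q := by
  rw [zz, zz']
  rw [show (star (Complex.exp (Complex.I * 2 * (Real.pi:ℂ) * p / q)) : ℂ) =
      (starRingEnd ℂ) (Complex.exp (Complex.I * 2 * (Real.pi:ℂ) * p / q)) from rfl]
  rw [← Complex.exp_conj]
  congr 1
  simp only [_root_.map_mul, map_div₀, map_ofNat, Complex.conj_ofReal, Complex.conj_I,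
    Complex.conj_natCast, map_intCast]
  ring

lemma jf_star_succ [NeZero q] (hq : 0 < q) (k : Fin q) :
    star (jf p q ((k + 1 : Fin q) : ℕ)) = zz' p q * star (jf p q (k : ℕ)) := by
  rw [jf_succ hq, star_mul', star_zz]

-- atoms
lemma A1 (hq : 0 < q) : Jmat p q * Vm p q = Vm p q * (Kmat q)ᴴ := by
  haveI : NeZero q := ⟨hq.ne'⟩
  have hq0 : (q:ℂ) ≠ 0 := Nat.cast_ne_zero.2 hq.ne'
  ext j k
  rw [mul_KH, Jmat_eq, Matrix.diagonal_mul]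
  simp only [Vm, Matrix.of_apply]
  rw [fin_val_add_one, vf_right_mod hq, jf, vf, vf, ← Complex.exp_add]
  apply exp_shift _ _ 0
  push_cast
  field_simp
  ring

lemma A2 (hq : 0 < q) :
    Kmat q * Vm p q = cc p q • (Vm p q * (Jmat p q * (Kmat q)ᴴ)) := by
  haveI : NeZero q := ⟨hq.ne'⟩
  have hq0 : (q:ℂ) ≠ 0 := Nat.cast_ne_zero.2 hq.ne'
  ext j k
  rw [Matrix.smul_apply, K_mul, ← Matrix.mul_assoc, mul_KH, Jmat_eq, Matrix.mul_diagonal]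
  simp only [Vm, Matrix.of_apply]
  rw [fin_val_add_one j, fin_val_add_one k, vf_left_mod hq, vf_right_mod hq, jf_mod hq]
  rw [cc, vf, vf, jf, smul_eq_mul, ← Complex.exp_add, ← Complex.exp_add]
  apply exp_shift _ _ 0
  push_cast
  field_simp
  ring

-- commutation lemmas
lemma W1 (hq : 0 < q) : Kmat q * Jmat p q = zz p q • (Jmat p q * Kmat q) := by
  haveI : NeZero q := ⟨hq.ne'⟩
  ext j k
  rw [Matrix.smul_apply, K_mul, Jmat_eq, Matrix.diagonal_mul, Matrix.diagonal_apply, Kmat_apply]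
  by_cases h : j + 1 = k
  · rw [if_pos h, if_pos h, h, ← h, jf_succ hq]
    simp only [smul_eq_mul]
    ring
  · rw [if_neg h, if_neg h]
    simp

lemma W2 (hq : 0 < q) :
    Jmat p q * (Kmat q)ᴴ = zz p q • ((Kmat q)ᴴ * Jmat p q) := by
  haveI : NeZero q := ⟨hq.ne'⟩
  ext j k
  rw [Matrix.smul_apply, Jmat_eq, Matrix.diagonal_mul, Matrix.mul_diagonal,
    Matrix.conjTranspose_apply, Kmat_apply]
  by_cases h : k + 1 = j
  · rw [if_pos h, ← h, jf_succ hq]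
    simp only [smul_eq_mul, star_one]
    ring
  · rw [if_neg h]
    simp

lemma W3 (hq : 0 < q) :
    Kmat q * (Jmat p q)ᴴ = zz' p q • ((Jmat p q)ᴴ * Kmat q) := by
  haveI : NeZero q := ⟨hq.ne'⟩
  ext j k
  rw [Matrix.smul_apply, Jmat_eq, Matrix.diagonal_conjTranspose, K_mul,
    Matrix.diagonal_apply, Matrix.diagonal_mul, Kmat_apply]
  by_cases h : j + 1 = k
  · rw [if_pos h, if_pos h, h, ← h, Pi.star_apply, Pi.star_apply, jf_star_succ hq]
    simp only [smul_eq_mul]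
    ring
  · rw [if_neg h, if_neg h]
    simp

-- scalar products
lemma cz1 (hq : 0 < q) : cc p q * zz p q = c3 p q := by
  have hq0 : (q:ℂ) ≠ 0 := Nat.cast_ne_zero.2 hq.ne'
  rw [cc, zz, c3, ← Complex.exp_add]
  congr 1
  field_simp
  ring

lemma cz2 (hq : 0 < q) : cc' p q * zz' p q = c2 p q := by
  have hq0 : (q:ℂ) ≠ 0 := Nat.cast_ne_zero.2 hq.ne'
  rw [cc', zz', c2, ← Complex.exp_add]
  congr 1
  field_simp
  ring

-- derived atoms
lemma A1' (hq : 0 < q) : (Jmat p q)ᴴ * Vm p q = Vm p q * Kmat q := by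
  have h1 : Jmat p q * (Vm p q * Kmat q) = Vm p q := by
    rw [← Matrix.mul_assoc, A1 hq, Matrix.mul_assoc, KHK hq, Matrix.mul_one]
  calc (Jmat p q)ᴴ * Vm p q = (Jmat p q)ᴴ * (Jmat p q * (Vm p q * Kmat q)) := by rw [h1]
    _ = ((Jmat p q)ᴴ * Jmat p q) * (Vm p q * Kmat q) := by rw [Matrix.mul_assoc]
    _ = Vm p q * Kmat q := by rw [JHJ, Matrix.one_mul]

lemma A4 (hq : 0 < q) :
    Vm p q * (Kmat q * (Jmat p q)ᴴ) = cc p q • ((Kmat q)ᴴ * Vm p q) := by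
  have h1 : Vm p q = cc p q • ((Kmat q)ᴴ * (Vm p q * (Jmat p q * (Kmat q)ᴴ))) := by
    calc Vm p q = ((Kmat q)ᴴ * Kmat q) * Vm p q := by rw [KHK hq, Matrix.one_mul]
      _ = (Kmat q)ᴴ * (Kmat q * Vm p q) := by rw [Matrix.mul_assoc]
      _ = (Kmat q)ᴴ * (cc p q • (Vm p q * (Jmat p q * (Kmat q)ᴴ))) := by rw [A2 hq]
      _ = cc p q • ((Kmat q)ᴴ * (Vm p q * (Jmat p q * (Kmat q)ᴴ))) := by
            rw [Matrix.mul_smul]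
  calc Vm p q * (Kmat q * (Jmat p q)ᴴ)
      = (cc p q • ((Kmat q)ᴴ * (Vm p q * (Jmat p q * (Kmat q)ᴴ)))) * (Kmat q * (Jmat p q)ᴴ) := by
        rw [← h1]
    _ = cc p q • (((Kmat q)ᴴ * (Vm p q * (Jmat p q * (Kmat q)ᴴ))) * (Kmat q * (Jmat p q)ᴴ)) := by
        rw [Matrix.smul_mul]
    _ = cc p q • ((Kmat q)ᴴ * (Vm p q * ((Jmat p q * ((Kmat q)ᴴ * Kmat q)) * (Jmat p q)ᴴ))) := by
        simp only [Matrix.mul_assoc]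
    _ = cc p q • ((Kmat q)ᴴ * Vm p q) := by
        rw [KHK hq, Matrix.mul_one, JJH, Matrix.mul_one]

lemma A2' (hq : 0 < q) :
    (Kmat q)ᴴ * Vm p q = cc' p q • (Vm p q * (Kmat q * (Jmat p q)ᴴ)) := by
  rw [A4 hq, smul_smul, mul_comm (cc' p q) (cc p q), cc_mul_cc', one_smul]

-- B-lemmas
lemma B1 (hq : 0 < q) :
    (Jmat p q * (Kmat q)ᴴ) * Vm p q = cc' p q • (Vm p q * (Jmat p q)ᴴ) := by
  calc (Jmat p q * (Kmat q)ᴴ) * Vm p q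
      = Jmat p q * ((Kmat q)ᴴ * Vm p q) := by rw [Matrix.mul_assoc]
    _ = Jmat p q * (cc' p q • (Vm p q * (Kmat q * (Jmat p q)ᴴ))) := by rw [A2' hq]
    _ = cc' p q • ((Jmat p q * Vm p q) * (Kmat q * (Jmat p q)ᴴ)) := by
        rw [Matrix.mul_smul, Matrix.mul_assoc]
    _ = cc' p q • ((Vm p q * (Kmat q)ᴴ) * (Kmat q * (Jmat p q)ᴴ)) := by rw [A1 hq]
    _ = cc' p q • (Vm p q * (((Kmat q)ᴴ * Kmat q) * (Jmat p q)ᴴ)) := by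
        simp only [Matrix.mul_assoc]
    _ = cc' p q • (Vm p q * (Jmat p q)ᴴ) := by rw [KHK hq, Matrix.one_mul]

lemma B2 (hq : 0 < q) :
    (Kmat q)ᴴ * Vm p q = c2 p q • (Vm p q * ((Jmat p q)ᴴ * Kmat q)) := by
  calc (Kmat q)ᴴ * Vm p q
      = cc' p q • (Vm p q * (Kmat q * (Jmat p q)ᴴ)) := A2' hq
    _ = cc' p q • (Vm p q * (zz' p q • ((Jmat p q)ᴴ * Kmat q))) := by rw [W3 hq]
    _ = (cc' p q * zz' p q) • (Vm p q * ((Jmat p q)ᴴ * Kmat q)) := by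
        rw [Matrix.mul_smul, smul_smul]
    _ = c2 p q • (Vm p q * ((Jmat p q)ᴴ * Kmat q)) := by rw [cz2 hq]

lemma B3 (hq : 0 < q) :
    ((Kmat q)ᴴ * Jmat p q) * Vm p q = c2 p q • (Vm p q * (Jmat p q)ᴴ) := by
  calc ((Kmat q)ᴴ * Jmat p q) * Vm p q
      = (Kmat q)ᴴ * (Jmat p q * Vm p q) := by rw [Matrix.mul_assoc]
    _ = (Kmat q)ᴴ * (Vm p q * (Kmat q)ᴴ) := by rw [A1 hq]
    _ = ((Kmat q)ᴴ * Vm p q) * (Kmat q)ᴴ := by rw [Matrix.mul_assoc]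
    _ = (cc' p q • (Vm p q * (Kmat q * (Jmat p q)ᴴ))) * (Kmat q)ᴴ := by rw [A2' hq]
    _ = cc' p q • (Vm p q * ((zz' p q • ((Jmat p q)ᴴ * Kmat q)) * (Kmat q)ᴴ)) := by
        rw [Matrix.smul_mul, ← W3 hq]
        simp only [Matrix.mul_assoc]
    _ = (cc' p q * zz' p q) • (Vm p q * ((Jmat p q)ᴴ * (Kmat q * (Kmat q)ᴴ))) := by
        rw [Matrix.smul_mul, Matrix.mul_smul, smul_smul]
        simp only [Matrix.mul_assoc]
    _ = c2 p q • (Vm p q * (Jmat p q)ᴴ) := by rw [KKH hq, Matrix.mul_one, cz2 hq]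

lemma B4 (hq : 0 < q) :
    (Kmat q * (Jmat p q)ᴴ) * Vm p q = cc p q • (Vm p q * Jmat p q) := by
  calc (Kmat q * (Jmat p q)ᴴ) * Vm p q
      = Kmat q * ((Jmat p q)ᴴ * Vm p q) := by rw [Matrix.mul_assoc]
    _ = Kmat q * (Vm p q * Kmat q) := by rw [A1' hq]
    _ = (Kmat q * Vm p q) * Kmat q := by rw [Matrix.mul_assoc]
    _ = (cc p q • (Vm p q * (Jmat p q * (Kmat q)ᴴ))) * Kmat q := by rw [A2 hq]
    _ = cc p q • (Vm p q * (Jmat p q * ((Kmat q)ᴴ * Kmat q))) := by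
        rw [Matrix.smul_mul]
        simp only [Matrix.mul_assoc]
    _ = cc p q • (Vm p q * Jmat p q) := by rw [KHK hq, Matrix.mul_one]

lemma B5 (hq : 0 < q) :
    Kmat q * Vm p q = c3 p q • (Vm p q * ((Kmat q)ᴴ * Jmat p q)) := by
  calc Kmat q * Vm p q
      = cc p q • (Vm p q * (Jmat p q * (Kmat q)ᴴ)) := A2 hq
    _ = cc p q • (Vm p q * (zz p q • ((Kmat q)ᴴ * Jmat p q))) := by rw [W2 hq]
    _ = (cc p q * zz p q) • (Vm p q * ((Kmat q)ᴴ * Jmat p q)) := by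
        rw [Matrix.mul_smul, smul_smul]
    _ = c3 p q • (Vm p q * ((Kmat q)ᴴ * Jmat p q)) := by rw [cz1 hq]

lemma B6 (hq : 0 < q) :
    ((Jmat p q)ᴴ * Kmat q) * Vm p q = c3 p q • (Vm p q * Jmat p q) := by
  calc ((Jmat p q)ᴴ * Kmat q) * Vm p q
      = (Jmat p q)ᴴ * (Kmat q * Vm p q) := by rw [Matrix.mul_assoc]
    _ = (Jmat p q)ᴴ * (cc p q • (Vm p q * (Jmat p q * (Kmat q)ᴴ))) := by rw [A2 hq]
    _ = cc p q • (((Jmat p q)ᴴ * Vm p q) * (Jmat p q * (Kmat q)ᴴ)) := by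
        rw [Matrix.mul_smul, Matrix.mul_assoc]
    _ = cc p q • ((Vm p q * Kmat q) * (Jmat p q * (Kmat q)ᴴ)) := by rw [A1' hq]
    _ = cc p q • (Vm p q * ((Kmat q * Jmat p q) * (Kmat q)ᴴ)) := by
        simp only [Matrix.mul_assoc]
    _ = cc p q • (Vm p q * ((zz p q • (Jmat p q * Kmat q)) * (Kmat q)ᴴ)) := by rw [W1 hq]
    _ = (cc p q * zz p q) • (Vm p q * (Jmat p q * (Kmat q * (Kmat q)ᴴ))) := by
        rw [Matrix.smul_mul, Matrix.mul_smul, smul_smul]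
        simp only [Matrix.mul_assoc]
    _ = c3 p q • (Vm p q * Jmat p q) := by rw [KKH hq, Matrix.mul_one, cz1 hq]

lemma star_exp (z : ℂ) : star (Complex.exp z) = Complex.exp (star z) := by
  rw [show (star (Complex.exp z) : ℂ) = (starRingEnd ℂ) (Complex.exp z) from rfl,
    ← Complex.exp_conj]
  rfl

lemma E1 (hq : 0 < q) (ω θ₁ θ₂ : ℝ) :
    CK p q (θ₁ + p * Real.pi) (θ₂ + p * Real.pi) ω * Vm p q
      = Vm p q * AK p q (-θ₁ + θ₂ + p * Real.pi) (-θ₁ + p * Real.pi) ω := by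
  have hq0 : (q:ℂ) ≠ 0 := Nat.cast_ne_zero.2 hq.ne'
  rw [CK, AK, Matrix.smul_mul, Matrix.mul_smul]
  congr 1
  rw [Matrix.add_mul, Matrix.mul_add, Matrix.smul_mul, Matrix.smul_mul,
    Matrix.mul_smul, Matrix.mul_smul, B1 hq, B2 hq, smul_smul, smul_smul]
  congr 1
  · congr 1
    rw [cc', ← Complex.exp_add, ← Complex.exp_add]
    apply exp_shift _ _ 0
    push_cast
    field_simp
    ring
  · congr 1
    rw [c2, ← Complex.exp_add, ← Complex.exp_add]
    apply exp_shift _ _ (-p)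
    push_cast
    field_simp
    ring

lemma E2 (hq : 0 < q) (ω θ₁ θ₂ : ℝ) :
    (AK p q (θ₁ + p * Real.pi) (θ₂ + p * Real.pi) ω)ᴴ * Vm p q
      = Vm p q * BK p q (-θ₁ + θ₂ + p * Real.pi) (-θ₁ + p * Real.pi) ω := by
  have hq0 : (q:ℂ) ≠ 0 := Nat.cast_ne_zero.2 hq.ne'
  have hcomm : ∀ a b : Matrix (Fin q) (Fin q) ℂ, a + b = b + a := fun a b => add_comm a b
  rw [AK, BK]
  simp only [Matrix.conjTranspose_smul, Matrix.conjTranspose_add, Matrix.conjTranspose_mul,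
    Matrix.conjTranspose_conjTranspose, star_mul', star_exp, Complex.star_def, _root_.map_mul,
    map_neg, Complex.conj_I, Complex.conj_ofReal, neg_neg, neg_mul]
  rw [Matrix.smul_mul, Matrix.mul_smul]
  congr 1
  rw [Matrix.add_mul, Matrix.mul_add, Matrix.smul_mul, Matrix.smul_mul,
    Matrix.mul_smul, Matrix.mul_smul, A1 hq, B3 hq, smul_smul, hcomm]
  congr 1
  · congr 1
    rw [c2]
    simp only [← Complex.exp_add]
    apply exp_shift _ _ 0
    push_cast
    field_simp
    ring
  · congr 1
    apply exp_shift _ _ p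
    push_cast
    ring

lemma E3 (hq : 0 < q) (ω θ₁ θ₂ : ℝ) :
    (BK p q (θ₁ + p * Real.pi) (θ₂ + p * Real.pi) ω)ᴴ * Vm p q
      = Vm p q * CK p q (-θ₁ + θ₂ + p * Real.pi) (-θ₁ + p * Real.pi) ω := by
  have hq0 : (q:ℂ) ≠ 0 := Nat.cast_ne_zero.2 hq.ne'
  have hcomm : ∀ a b : Matrix (Fin q) (Fin q) ℂ, a + b = b + a := fun a b => add_comm a b
  rw [BK, CK]
  simp only [Matrix.conjTranspose_smul, Matrix.conjTranspose_add, Matrix.conjTranspose_mul,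
    Matrix.conjTranspose_conjTranspose, star_mul', star_exp, Complex.star_def, _root_.map_mul,
    map_neg, Complex.conj_I, Complex.conj_ofReal, neg_neg, neg_mul]
  rw [Matrix.smul_mul, Matrix.mul_smul]
  congr 1
  rw [Matrix.add_mul, Matrix.mul_add, Matrix.smul_mul, Matrix.smul_mul,
    Matrix.mul_smul, Matrix.mul_smul, A1 hq, A2 hq, smul_smul, hcomm]
  congr 1
  · congr 1
    rw [cc]
    simp only [← Complex.exp_add]
    apply exp_shift _ _ p
    push_cast
    field_simp
    ring
  · congr 1
    apply exp_shift _ _ p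
    push_cast
    ring

lemma E4 (hq : 0 < q) (ω θ₁ θ₂ : ℝ) :
    (CK p q (θ₁ + p * Real.pi) (θ₂ + p * Real.pi) ω)ᴴ * Vm p q
      = Vm p q * (AK p q (-θ₁ + θ₂ + p * Real.pi) (-θ₁ + p * Real.pi) ω)ᴴ := by
  have hq0 : (q:ℂ) ≠ 0 := Nat.cast_ne_zero.2 hq.ne'
  rw [CK, AK]
  simp only [Matrix.conjTranspose_smul, Matrix.conjTranspose_add, Matrix.conjTranspose_mul,
    Matrix.conjTranspose_conjTranspose, star_mul', star_exp, Complex.star_def, _root_.map_mul,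
    map_neg, Complex.conj_I, Complex.conj_ofReal, neg_neg, neg_mul]
  rw [Matrix.smul_mul, Matrix.mul_smul]
  congr 1
  rw [Matrix.add_mul, Matrix.mul_add, Matrix.smul_mul, Matrix.smul_mul,
    Matrix.mul_smul, Matrix.mul_smul, B4 hq, B5 hq, smul_smul, smul_smul]
  congr 1
  · congr 1
    rw [cc]
    simp only [← Complex.exp_add]
    apply exp_shift _ _ 0
    push_cast
    field_simp
    ring
  · congr 1
    rw [c3]
    simp only [← Complex.exp_add]
    apply exp_shift _ _ p
    push_cast
    field_simp
    ring

lemma E5 (hq : 0 < q) (ω θ₁ θ₂ : ℝ) :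
    AK p q (θ₁ + p * Real.pi) (θ₂ + p * Real.pi) ω * Vm p q
      = Vm p q * (BK p q (-θ₁ + θ₂ + p * Real.pi) (-θ₁ + p * Real.pi) ω)ᴴ := by
  have hq0 : (q:ℂ) ≠ 0 := Nat.cast_ne_zero.2 hq.ne'
  have hcomm : ∀ a b : Matrix (Fin q) (Fin q) ℂ, a + b = b + a := fun a b => add_comm a b
  rw [AK, BK]
  simp only [Matrix.conjTranspose_smul, Matrix.conjTranspose_add, Matrix.conjTranspose_mul,
    Matrix.conjTranspose_conjTranspose, star_mul', star_exp, Complex.star_def, _root_.map_mul,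
    map_neg, Complex.conj_I, Complex.conj_ofReal, neg_neg, neg_mul]
  rw [Matrix.smul_mul, Matrix.mul_smul]
  congr 1
  rw [Matrix.add_mul, Matrix.mul_add, Matrix.smul_mul, Matrix.smul_mul,
    Matrix.mul_smul, Matrix.mul_smul, A1' hq, B6 hq, smul_smul, hcomm]
  congr 1
  · congr 1
    rw [c3]
    simp only [← Complex.exp_add]
    apply exp_shift _ _ 0
    push_cast
    field_simp
    ring
  · congr 1
    apply exp_shift _ _ (-p)
    push_cast
    ring

lemma E6 (hq : 0 < q) (ω θ₁ θ₂ : ℝ) :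
    BK p q (θ₁ + p * Real.pi) (θ₂ + p * Real.pi) ω * Vm p q
      = Vm p q * (CK p q (-θ₁ + θ₂ + p * Real.pi) (-θ₁ + p * Real.pi) ω)ᴴ := by
  have hq0 : (q:ℂ) ≠ 0 := Nat.cast_ne_zero.2 hq.ne'
  have hcomm : ∀ a b : Matrix (Fin q) (Fin q) ℂ, a + b = b + a := fun a b => add_comm a b
  rw [BK, CK]
  simp only [Matrix.conjTranspose_smul, Matrix.conjTranspose_add, Matrix.conjTranspose_mul,
    Matrix.conjTranspose_conjTranspose, star_mul', star_exp, Complex.star_def, _root_.map_mul,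
    map_neg, Complex.conj_I, Complex.conj_ofReal, neg_neg, neg_mul]
  rw [Matrix.smul_mul, Matrix.mul_smul]
  congr 1
  rw [Matrix.add_mul, Matrix.mul_add, Matrix.smul_mul, Matrix.smul_mul,
    Matrix.mul_smul, Matrix.mul_smul, A1' hq, A2' hq, smul_smul, hcomm]
  congr 1
  · congr 1
    rw [cc']
    simp only [← Complex.exp_add]
    apply exp_shift _ _ (-p)
    push_cast
    field_simp
    ring
  · congr 1
    apply exp_shift _ _ (-p)
    push_cast
    ring

-- orthogonality
lemma term_eq (hq : 0 < q) (j l k : Fin q) :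
    vf p q j k * star (vf p q l k) =
      Complex.exp (Complex.I * (Real.pi:ℂ) * p *
          (((j:ℕ):ℂ) * q + ((j:ℕ):ℂ) * ((j:ℕ):ℂ) - (((l:ℕ):ℂ) * q + ((l:ℕ):ℂ) * ((l:ℕ):ℂ))) / q) *
        Complex.exp (((((j:ℕ):ℤ) - ((l:ℕ):ℤ)) * p : ℤ) * (2 * (Real.pi:ℂ) * Complex.I) / q) ^ (k:ℕ) := by
  have hq0 : (q:ℂ) ≠ 0 := Nat.cast_ne_zero.2 hq.ne'
  rw [vf, vf, star_exp, ← Complex.exp_nat_mul, ← Complex.exp_add, ← Complex.exp_add]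
  apply exp_shift _ _ 0
  simp only [Complex.star_def, _root_.map_mul, map_div₀, map_add, Complex.conj_I,
    Complex.conj_ofReal, Complex.conj_natCast, map_intCast, map_ofNat]
  push_cast
  field_simp
  ring

lemma VVH (hq : 0 < q) (hpq : Int.gcd p (q : ℤ) = 1) :
    Vm p q * (Vm p q)ᴴ = (q:ℂ) • (1 : Matrix (Fin q) (Fin q) ℂ) := by
  have hq0 : (q:ℂ) ≠ 0 := Nat.cast_ne_zero.2 hq.ne'
  ext j l
  rw [Matrix.mul_apply, Matrix.smul_apply, Matrix.one_apply]
  simp only [Matrix.conjTranspose_apply, Vm, Matrix.of_apply]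
  set m : ℤ := ((j:ℕ):ℤ) - ((l:ℕ):ℤ) with hm
  set w : ℂ := Complex.exp ((m * p : ℤ) * (2 * (Real.pi:ℂ) * Complex.I) / q) with hw
  set C : ℂ := Complex.exp (Complex.I * (Real.pi:ℂ) * p *
      (((j:ℕ):ℂ) * q + ((j:ℕ):ℂ) * ((j:ℕ):ℂ) - (((l:ℕ):ℂ) * q + ((l:ℕ):ℂ) * ((l:ℕ):ℂ))) / q) with hC
  have hterm : ∀ k : Fin q, vf p q j k * star (vf p q l k) = C * w ^ (k:ℕ) :=
    fun k => term_eq hq j l k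
  rw [Finset.sum_congr rfl (fun k _ => hterm k), ← Finset.mul_sum]
  by_cases h : j = l
  · subst h
    have hm0 : m = 0 := by omega
    have hw1 : w = 1 := by rw [hw, hm0]; simp
    have hC1 : C = 1 := by
      rw [hC, show (Complex.I * (Real.pi:ℂ) * p *
        (((j:ℕ):ℂ) * q + ((j:ℕ):ℂ) * ((j:ℕ):ℂ) - (((j:ℕ):ℂ) * q + ((j:ℕ):ℂ) * ((j:ℕ):ℂ))) / q) = 0 by ring]
      exact Complex.exp_zero
    rw [hw1, hC1]
    simp
  · have hm0 : m ≠ 0 := by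
      intro h0
      apply h
      apply Fin.ext
      omega
    have hw1 : w ≠ 1 := by
      intro h1
      rw [hw, Complex.exp_eq_one_iff] at h1
      obtain ⟨n, hn⟩ := h1
      have h2pi : (2 * (Real.pi:ℂ) * Complex.I) ≠ 0 := by
        simp [Real.pi_ne_zero, Complex.I_ne_zero]
      have hmp : ((m * p : ℤ) : ℂ) = (n * q : ℤ) := by
        push_cast
        apply mul_right_cancel₀ h2pi
        field_simp at hn
        push_cast at hn
        linear_combination (2 * (Real.pi:ℂ) * Complex.I) * hn
      have hmp' : m * p = n * q := by exact_mod_cast hmp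
      have hdvd : (q:ℤ) ∣ p * m := ⟨n, by linarith [hmp']⟩
      have hqm : (q:ℤ) ∣ m := Int.dvd_of_dvd_mul_right_of_gcd_one hdvd (by
        rw [Int.gcd_comm]; exact hpq)
      have habs : |m| < (q:ℤ) := by
        rw [abs_lt]
        constructor
        · have := l.isLt; omega
        · have := j.isLt; omega
      have hle : (q:ℤ) ≤ |m| := Int.le_of_dvd (abs_pos.mpr hm0) ((dvd_abs _ _).mpr hqm)
      omega
    have hsum : ∑ k : Fin q, w ^ (k:ℕ) = 0 := by
      rw [Fin.sum_univ_eq_sum_range (fun i => w ^ i) q, geom_sum_eq hw1]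
      have hwq : w ^ q = 1 := by
        rw [hw, ← Complex.exp_nat_mul]
        rw [show ((q:ℂ) * (((m * p : ℤ):ℂ) * (2 * (Real.pi:ℂ) * Complex.I) / q)) =
            ((m * p : ℤ):ℂ) * (2 * (Real.pi:ℂ) * Complex.I) by field_simp]
        exact Complex.exp_int_mul_two_pi_mul_I (m * p)
      rw [hwq]
      simp
    rw [hsum, if_neg h]
    simp

-- block machinery
def blk (M : Fin 3 → Fin 3 → Matrix (Fin q) (Fin q) ℂ) :
    Matrix (Fin 3 × Fin q) (Fin 3 × Fin q) ℂ :=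
  Matrix.of fun x y => M x.1 y.1 x.2 y.2

lemma blk_mul (M N : Fin 3 → Fin 3 → Matrix (Fin q) (Fin q) ℂ) :
    blk M * blk N = blk (fun i i' => ∑ k, M i k * N k i') := by
  ext x y
  simp only [blk, Matrix.mul_apply, Matrix.of_apply, Fintype.sum_prod_type,
    Matrix.sum_apply]

def Smat (p : ℤ) (q : ℕ) : Matrix (Fin 3 × Fin q) (Fin 3 × Fin q) ℂ :=
  blk ![![0, 0, Vm p q], ![Vm p q, 0, 0], ![0, Vm p q, 0]]

def Tmat (p : ℤ) (q : ℕ) : Matrix (Fin 3 × Fin q) (Fin 3 × Fin q) ℂ :=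
  blk ![![0, (Vm p q)ᴴ, 0], ![0, 0, (Vm p q)ᴴ], ![(Vm p q)ᴴ, 0, 0]]

lemma hST (hq : 0 < q) (hpq : Int.gcd p (q : ℤ) = 1) :
    Smat p q * Tmat p q = (q:ℂ) • (1 : Matrix (Fin 3 × Fin q) (Fin 3 × Fin q) ℂ) := by
  rw [Smat, Tmat, blk_mul]
  ext ⟨i, j⟩ ⟨i', j'⟩
  fin_cases i <;> fin_cases i' <;>
    simp [blk, Fin.sum_univ_three, VVH hq hpq, Matrix.one_apply, Prod.ext_iff,
      Matrix.smul_apply, Matrix.vecHead, Matrix.vecTail]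

lemma detS_ne (hq : 0 < q) (hpq : Int.gcd p (q : ℤ) = 1) :
    (Smat p q).det ≠ 0 := by
  have h1 : (Smat p q).det * (Tmat p q).det = ((q:ℂ)) ^ (3 * q) := by
    rw [← Matrix.det_mul, hST hq hpq, Matrix.smul_one_eq_diagonal]
    rw [Matrix.det_diagonal]
    simp [Finset.prod_const, Fintype.card_prod]
  intro h0
  rw [h0, zero_mul] at h1
  exact (pow_ne_zero _ (Nat.cast_ne_zero.2 hq.ne')) h1.symm

lemma hMS (hq : 0 < q) (ω θ₁ θ₂ : ℝ) :
    MK p q (θ₁ + p * Real.pi) (θ₂ + p * Real.pi) ω * Smat p q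
      = Smat p q * MK p q (-θ₁ + θ₂ + p * Real.pi) (-θ₁ + p * Real.pi) ω := by
  show blk _ * blk _ = blk _ * blk _
  rw [blk_mul, blk_mul]
  apply congrArg blk
  funext i i'
  fin_cases i <;> fin_cases i' <;>
    simp [Fin.sum_univ_three, Matrix.vecHead, Matrix.vecTail]
  · exact E5 hq ω θ₁ θ₂
  · exact E6 hq ω θ₁ θ₂
  · exact E1 hq ω θ₁ θ₂
  · exact E2 hq ω θ₁ θ₂
  · exact E4 hq ω θ₁ θ₂
  · exact E3 hq ω θ₁ θ₂

end Aux

theorem stmt_11 (p : ℤ) (q : ℕ) (hq : 0 < q) (hpq : Int.gcd p (q : ℤ) = 1)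
    (ω θ₁ θ₂ : ℝ) (l : ℂ) :
    PK p q (-θ₁ + θ₂ + p * Real.pi) (-θ₁ + p * Real.pi) ω l =
      PK p q (θ₁ + p * Real.pi) (θ₂ + p * Real.pi) ω l := by
  have hmain := hMS (p := p) hq ω θ₁ θ₂
  have hS : (Smat p q).det ≠ 0 := detS_ne hq hpq
  have key : (MK p q (θ₁ + p * Real.pi) (θ₂ + p * Real.pi) ω
        - l • (1 : Matrix (Fin 3 × Fin q) (Fin 3 × Fin q) ℂ)) * Smat p q
      = Smat p q * (MK p q (-θ₁ + θ₂ + p * Real.pi) (-θ₁ + p * Real.pi) ω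
        - l • (1 : Matrix (Fin 3 × Fin q) (Fin 3 × Fin q) ℂ)) := by
    rw [Matrix.sub_mul, Matrix.mul_sub, hmain, Matrix.smul_mul, Matrix.mul_smul,
      Matrix.one_mul, Matrix.mul_one]
  have hdet := congrArg Matrix.det key
  rw [Matrix.det_mul, Matrix.det_mul] at hdet
  unfold PK
  rw [mul_comm] at hdet
  exact (mul_left_cancel₀ hS hdet).symm
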